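/- Let m ≥ 2, γ a primitive m-th root of unity in k, and φ_i(x) = 1 - γ^{-i-1} x^d. Then ∑_{j=0}^{m-1} γ^{-j} · (φ_0 ⋯ φ̂_{j-2} φ̂_{j-1} ⋯ φ_{m-1}) = 0, where both factors φ_{j-2} and φ_{j-1} are omitted (indices mod m), i.e. ∑_{j=0}^{m-1} γ^{-j} φ_j φ_{j+1} ⋯ φ_{j+m-3} = 0. -/

import Mathlib

open Polynomial Finset

/-- ∑_{j=0}^{m-1} γ^{-j} φ_j φ_{j+1} ⋯ φ_{j+m-3} = 0. -/
theorem stmt_2 {k : Type*} [Field k] [IsAlgClosed k] [CharZero k]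
    (m d : ℕ) (hm : 2 ≤ m) (hd : 1 ≤ d) (γ : k) (hγ : IsPrimitiveRoot γ m) :
    ∑ j ∈ Finset.range m, Polynomial.C (γ ^ (-(j : ℤ))) *
      ∏ r ∈ Finset.range (m - 2),
        ((1 : Polynomial k) - Polynomial.C (γ ^ (-((j : ℤ) + (r : ℤ)) - 1)) * Polynomial.X ^ d)
      = 0 := by
  have hm0 : m ≠ 0 := by omega
  have hγ0 : γ ≠ 0 := hγ.ne_zero hm0
  set P : k[X] := ∏ r ∈ range (m - 2), (1 - C (γ ^ (-(r:ℤ) - 1)) * X) with hP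
  have hPdeg : P.natDegree < m - 1 := by
    have h1 : P.natDegree ≤ ∑ r ∈ range (m-2), (1 - C (γ ^ (-(r:ℤ) - 1)) * X).natDegree :=
      natDegree_prod_le _ _
    have h2 : ∀ r ∈ range (m-2), (1 - C (γ ^ (-(r:ℤ) - 1)) * X).natDegree ≤ 1 := by
      intro r _
      compute_degree
    have h3 := Finset.sum_le_sum h2
    simp only [Finset.sum_const, card_range, smul_eq_mul, mul_one] at h3
    omega
  have key : ∀ j : ℕ,
      C (γ ^ (-(j:ℤ))) * ∏ r ∈ range (m-2),
        ((1:k[X]) - C (γ ^ (-((j:ℤ)+(r:ℤ)) - 1)) * X^d)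
      = ∑ i ∈ range (m-1), C (P.coeff i) * (C (((γ^(i+1))⁻¹)^j) * X^(d*i)) := by
    intro j
    have h1 : ∏ r ∈ range (m-2), ((1:k[X]) - C (γ ^ (-((j:ℤ)+(r:ℤ)) - 1)) * X^d)
        = P.comp (C (γ ^ (-(j:ℤ))) * X^d) := by
      rw [hP, Polynomial.prod_comp]
      refine prod_congr rfl fun r _ => ?_
      simp only [sub_comp, one_comp, mul_comp, C_comp, X_comp, pow_comp]
      rw [← mul_assoc, ← C_mul, ← zpow_add₀ hγ0]
      norm_num
      ring_nf
    rw [h1]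
    rw [show P.comp (C (γ ^ (-(j:ℤ))) * X^d) = eval₂ C (C (γ ^ (-(j:ℤ))) * X^d) P from rfl,
      eval₂_eq_sum_range' C hPdeg]
    rw [Finset.mul_sum]
    refine Finset.sum_congr rfl fun i _ => ?_
    rw [mul_pow, ← C_pow, ← pow_mul]
    have hz : γ ^ (-(j:ℤ)) * (γ ^ (-(j:ℤ)))^i = ((γ^(i+1))⁻¹)^j := by
      rw [zpow_neg, zpow_natCast, ← inv_pow, ← pow_succ', ← pow_mul, ← inv_pow, ← pow_mul,
        mul_comm j (i+1)]
    rw [← hz]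
    rw [C_mul]
    ring
  calc ∑ j ∈ Finset.range m, C (γ ^ (-(j : ℤ))) *
      ∏ r ∈ range (m - 2), ((1 : k[X]) - C (γ ^ (-((j:ℤ) + (r:ℤ)) - 1)) * X ^ d)
      = ∑ j ∈ range m, ∑ i ∈ range (m-1), C (P.coeff i) * (C (((γ^(i+1))⁻¹)^j) * X^(d*i)) :=
        Finset.sum_congr rfl fun j _ => key j
    _ = ∑ i ∈ range (m-1), C (P.coeff i) * (C (∑ j ∈ range m, ((γ^(i+1))⁻¹)^j) * X^(d*i)) := by
        rw [Finset.sum_comm]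
        refine Finset.sum_congr rfl fun i _ => ?_
        rw [map_sum, Finset.sum_mul, Finset.mul_sum]
    _ = 0 := by
        refine Finset.sum_eq_zero fun i hi => ?_
        have hne : (γ^(i+1))⁻¹ ≠ 1 := by
          rw [Ne, inv_eq_one, hγ.pow_eq_one_iff_dvd]
          intro h
          have := Nat.le_of_dvd (by omega) h
          simp only [mem_range] at hi
          omega
        have hpow : ((γ^(i+1))⁻¹)^m = 1 := by
          rw [inv_pow, ← pow_mul, mul_comm, pow_mul, hγ.pow_eq_one, one_pow, inv_one]
        rw [geom_sum_eq hne, hpow]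
        simp
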